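/- Fix integers p₁, p₂ ≥ 2, set n = p₁ + p₂, fix λ ∈ {−1, +1}, and let ℓ > 0. Let ξ₁, ξ₂, y₁, y₂, γ : [ℓ, ∞) → ℝ be differentiable functions satisfying, for all s ≥ ℓ and α = 1, 2, s·ξ_α'(s) = −2(n−1+ξ_α(s)) y_α(s), s·y_α'(s) = ξ_α(s) + (γ(s) − n + 1 − λs²) y_α(s) + γ(s), and s·γ'(s) = γ(s) + Σ_{β=1,2} p_β (2y_β(s) + y_β(s)²), and assume sup_s |ξ_α(s)| < ∞, sup_s |y_α(s)| < ∞, and sup_s |γ(s)/s| < ∞. Then there exist constants ξ_{1,∞}, ξ_{2,∞}, K_∞ ∈ ℝ such that, as s → ∞, ξ_α(s) = ξ_{α,∞} + O(1/s) for α = 1, 2, y_α(s) = O(1/s) for α = 1, 2, and γ(s) = K_∞ s + O(1/s). -/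

import Mathlib

open Filter Asymptotics

section SolitonHelpers

open Set

lemma barrier_upper {f f' : ℝ → ℝ} {a B : ℝ}
    (hd : ∀ s, a ≤ s → HasDerivAt f (f' s) s)
    (ha : f a ≤ B)
    (hB : ∀ s, a ≤ s → f s = B → f' s < 0) :
    ∀ s, a ≤ s → f s ≤ B := by
  intro s hs
  have h := image_le_of_deriv_right_lt_deriv_boundary
    (f := f) (f' := f') (a := a) (b := s) (B := fun _ => B) (B' := fun _ => 0)
    (fun x hx => (hd x hx.1).continuousAt.continuousWithinAt)
    (fun x hx => (hd x hx.1).hasDerivWithinAt)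
    ha (fun x => hasDerivAt_const x B)
    (fun x hx hfx => hB x hx.1 hfx)
  exact h ⟨hs, le_rfl⟩

lemma barrier_lower {f f' : ℝ → ℝ} {a B : ℝ}
    (hd : ∀ s, a ≤ s → HasDerivAt f (f' s) s)
    (ha : B ≤ f a)
    (hB : ∀ s, a ≤ s → f s = B → 0 < f' s) :
    ∀ s, a ≤ s → B ≤ f s := by
  have h := barrier_upper (f := fun s => -f s) (f' := fun s => -f' s) (a := a) (B := -B)
    (fun s hs => (hd s hs).neg) (by simpa)
    (fun s hs hfs => by
      have h1 : -f s = -B := hfs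
      have h2 : f s = B := by linarith
      simpa using hB s hs h2)
  intro s hs
  have h3 : -f s ≤ -B := h s hs
  linarith

lemma linear_growth {f f' : ℝ → ℝ} {a δ : ℝ}
    (hd : ∀ s, a ≤ s → HasDerivAt f (f' s) s)
    (hlb : ∀ s, a ≤ s → δ ≤ f' s) :
    ∀ s, a ≤ s → f a + δ * (s - a) ≤ f s := by
  intro s hs
  have hmono : MonotoneOn (fun t => f t - δ * t) (Ici a) := by
    apply monotoneOn_of_hasDerivWithinAt_nonneg (convex_Ici a)
      (f' := fun x => f' x - δ)
    · exact fun x hx => ((hd x hx).sub ((hasDerivAt_id x).const_mul δ)).continuousAt.continuousWithinAt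
    · intro x hx
      rw [interior_Ici] at hx
      exact (((hd x hx.le).sub ((hasDerivAt_id x).const_mul δ)).hasDerivWithinAt).congr_deriv
        (by ring)
    · intro x hx
      rw [interior_Ici] at hx
      linarith [hlb x hx.le]
  have h2 : f a - δ * a ≤ f s - δ * s := hmono self_mem_Ici hs hs
  linarith

lemma converge_aux {g g' k k' : ℝ → ℝ} {a : ℝ}
    (hg : ∀ s, a ≤ s → HasDerivAt g (g' s) s)
    (hk : ∀ s, a ≤ s → HasDerivAt k (k' s) s)
    (hk0 : ∀ s, a ≤ s → 0 ≤ k s)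
    (hbound : ∀ s, a ≤ s → |g' s| ≤ -(k' s))
    (hgb : ∃ C, ∀ s, a ≤ s → |g s| ≤ C) :
    ∃ L, ∀ s, a ≤ s → |g s - L| ≤ k s := by
  obtain ⟨C, hC⟩ := hgb
  have hanti : AntitoneOn (fun s => g s + k s) (Ici a) := by
    apply antitoneOn_of_hasDerivWithinAt_nonpos (convex_Ici a)
      (f' := fun x => g' x + k' x)
    · exact fun x hx => ((hg x hx).add (hk x hx)).continuousAt.continuousWithinAt
    · intro x hx
      rw [interior_Ici] at hx
      exact ((hg x hx.le).add (hk x hx.le)).hasDerivWithinAt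
    · intro x hx
      rw [interior_Ici] at hx
      have := abs_le.mp (hbound x hx.le)
      linarith [this.2]
  have hmono : MonotoneOn (fun s => g s - k s) (Ici a) := by
    apply monotoneOn_of_hasDerivWithinAt_nonneg (convex_Ici a)
      (f' := fun x => g' x - k' x)
    · exact fun x hx => ((hg x hx).sub (hk x hx)).continuousAt.continuousWithinAt
    · intro x hx
      rw [interior_Ici] at hx
      exact ((hg x hx.le).sub (hk x hx.le)).hasDerivWithinAt
    · intro x hx
      rw [interior_Ici] at hx
      have := abs_le.mp (hbound x hx.le)
      linarith [this.1]
  set S : Set ℝ := (fun s => g s + k s) '' Ici a with hS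
  have hbdd : BddBelow S := by
    refine ⟨-C, ?_⟩
    rintro x ⟨s, hs, rfl⟩
    have h1 := abs_le.mp (hC s hs)
    have h2 := hk0 s hs
    simp only
    linarith [h1.1]
  have hne : S.Nonempty := ⟨_, ⟨a, self_mem_Ici, rfl⟩⟩
  refine ⟨sInf S, fun s hs => ?_⟩
  rw [abs_sub_le_iff]
  constructor
  · have h : g s - k s ≤ sInf S := by
      apply le_csInf hne
      rintro b ⟨t, ht, rfl⟩
      rcases le_total t s with h | h
      · have h4 : g s + k s ≤ g t + k t := hanti ht hs h
        simp only
        linarith [hk0 s hs]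
      · have h4 : g s - k s ≤ g t - k t := hmono hs ht h
        simp only
        linarith [hk0 t ht]
    linarith
  · have h : sInf S ≤ g s + k s := csInf_le hbdd ⟨s, hs, rfl⟩
    linarith

/-- One-sided decay for the `y` equation `y' = -lam*s*y + g`. -/
lemma y_upper (lam : ℝ) (hlam : lam = -1 ∨ lam = 1) {a M Cy : ℝ} (ha : 2 ≤ a)
    (hM : 0 ≤ M) (hCy : 0 ≤ Cy) {y g : ℝ → ℝ}
    (hd : ∀ s, a ≤ s → HasDerivAt y (-lam * s * y s + g s) s)
    (hg : ∀ s, a ≤ s → |g s| ≤ M)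
    (hb : ∀ s, a ≤ s → |y s| ≤ Cy) :
    ∀ s, a ≤ s → s * y s ≤ 2 * M + a * Cy + 1 := by
  have ha0 : (0:ℝ) ≤ a := by linarith
  have haCy : 0 ≤ a * Cy := mul_nonneg ha0 hCy
  have haCy2 : 2 * Cy ≤ a * Cy := by
    have := mul_nonneg (by linarith : (0:ℝ) ≤ a - 2) hCy
    nlinarith
  set K : ℝ := 2 * M + a * Cy + 1 with hK
  have hK0 : 0 < K := by positivity
  have hKM : 0 ≤ K - M := by simp only [hK]; linarith
  have hdF : ∀ s, a ≤ s →
      HasDerivAt (fun t => t * y t) (y s + s * (-lam * s * y s + g s)) s := by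
    intro s hs
    have := (hasDerivAt_id s).mul (hd s hs)
    exact this.congr_deriv (by simp)
  rcases hlam with h | h
  · subst h
    by_contra hcon
    push_neg at hcon
    obtain ⟨s₁, hs₁, hgt⟩ := hcon
    have has₁ : (2:ℝ) ≤ s₁ := le_trans ha hs₁
    have hstay : ∀ s, s₁ ≤ s → K ≤ s * y s := by
      apply barrier_lower (f' := fun s => y s + s * (-(-1) * s * y s + g s))
      · exact fun s hs => hdF s (le_trans hs₁ hs)
      · exact hgt.le
      · intro s hs hfs
        have hsa : a ≤ s := le_trans hs₁ hs
        have hs2 : (2:ℝ) ≤ s := le_trans ha hsa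
        have hg1 := abs_le.mp (hg s hsa)
        have hb1 := abs_le.mp (hb s hsa)
        have h1 : s * (s * y s) = s * K := by rw [hfs]
        have goal_eq : y s + s * (-(-1) * s * y s + g s) = y s + s * K + s * g s := by
          rw [← h1]; ring
        rw [goal_eq]
        have hsg : s * -M ≤ s * g s :=
          mul_le_mul_of_nonneg_left hg1.1 (by linarith)
        have hKM2 : 2 * (K - M) ≤ s * (K - M) :=
          mul_le_mul_of_nonneg_right hs2 hKM
        have hKexp : K = 2 * M + a * Cy + 1 := hK
        nlinarith [hb1.1]
    have hgrow := linear_growth (f := y)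
      (f' := fun s => -(-1) * s * y s + g s) (a := s₁) (δ := 1)
      (fun s hs => hd s (le_trans hs₁ hs))
      (by
        intro s hs
        have hsa : a ≤ s := le_trans hs₁ hs
        have hg1 := abs_le.mp (hg s hsa)
        have hst := hstay s hs
        have hKexp : K = 2 * M + a * Cy + 1 := hK
        nlinarith [hg1.1])
    have hfin := hgrow (s₁ + 2 * Cy + 1) (by linarith)
    have hb1 := abs_le.mp (hb s₁ hs₁)
    have hb2 := abs_le.mp (hb (s₁ + 2 * Cy + 1) (by linarith))
    linarith [hfin, hb1.1, hb2.2]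
  · subst h
    apply barrier_upper (f' := fun s => y s + s * (-1 * s * y s + g s))
    · exact hdF
    · have h1 := (abs_le.mp (hb a le_rfl)).2
      have h2 : a * y a ≤ a * Cy := mul_le_mul_of_nonneg_left h1 ha0
      simp only [hK]; linarith
    · intro s hs hfs
      have hs2 : (2:ℝ) ≤ s := le_trans ha hs
      have hg1 := abs_le.mp (hg s hs)
      have hb1 := abs_le.mp (hb s hs)
      have h1 : s * (s * y s) = s * K := by rw [hfs]
      have goal_eq : y s + s * (-1 * s * y s + g s) = y s - s * K + s * g s := by
        rw [← h1]; ring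
      rw [goal_eq]
      have hsg : s * g s ≤ s * M :=
        mul_le_mul_of_nonneg_left hg1.2 (by linarith)
      have hKM2 : 2 * (K - M) ≤ s * (K - M) :=
        mul_le_mul_of_nonneg_right hs2 hKM
      have hKexp : K = 2 * M + a * Cy + 1 := hK
      nlinarith [hb1.2]

/-- Two-sided decay. -/
lemma y_decay (lam : ℝ) (hlam : lam = -1 ∨ lam = 1) {a M Cy : ℝ} (ha : 2 ≤ a)
    (hM : 0 ≤ M) (hCy : 0 ≤ Cy) {y g : ℝ → ℝ}
    (hd : ∀ s, a ≤ s → HasDerivAt y (-lam * s * y s + g s) s)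
    (hg : ∀ s, a ≤ s → |g s| ≤ M)
    (hb : ∀ s, a ≤ s → |y s| ≤ Cy) :
    ∀ s, a ≤ s → |s * y s| ≤ 2 * M + a * Cy + 1 := by
  intro s hs
  rw [abs_le]
  constructor
  · have := y_upper lam hlam ha hM hCy (y := fun t => -y t) (g := fun t => -g t)
      (fun t ht => by
        have h := (hd t ht).neg
        exact h.congr_deriv (by ring))
      (fun t ht => by simpa using hg t ht)
      (fun t ht => by simpa using hb t ht) s hs
    simp only [mul_neg] at this
    linarith
  · exact y_upper lam hlam ha hM hCy hd hg hb s hs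

lemma hasDerivAt_const_div (c : ℝ) {s : ℝ} (hs : s ≠ 0) :
    HasDerivAt (fun t => c / t) (-(c / s ^ 2)) s := by
  have h := (hasDerivAt_inv hs).const_mul c
  have e : c * -(s ^ 2)⁻¹ = -(c / s ^ 2) := by field_simp
  rw [e] at h
  simpa [div_eq_mul_inv] using h

/-- Asymptotics of one `(ξ, y)` pair. -/
lemma component_asymp (lam n : ℝ) (hlam : lam = -1 ∨ lam = 1) (hn4 : 4 ≤ n)
    {a C Cy Cg : ℝ} (ha : 2 ≤ a) (hC : 0 ≤ C) (hCy : 0 ≤ Cy) (hCg : 0 ≤ Cg)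
    {ξ y γ : ℝ → ℝ}
    (hdξ : ∀ s, a ≤ s → HasDerivAt ξ ((-2 * (n - 1 + ξ s) * y s) / s) s)
    (hdy : ∀ s, a ≤ s →
      HasDerivAt y ((ξ s + (γ s - n + 1 - lam * s ^ 2) * y s + γ s) / s) s)
    (hbξ : ∀ s, a ≤ s → |ξ s| ≤ C)
    (hby : ∀ s, a ≤ s → |y s| ≤ Cy)
    (hbγ : ∀ s, a ≤ s → |γ s| ≤ Cg * s) :
    ∃ Ky ξinf c, 0 ≤ Ky ∧ 0 ≤ c ∧ (∀ s, a ≤ s → |s * y s| ≤ Ky) ∧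
      (∀ s, a ≤ s → |ξ s - ξinf| ≤ c / s) := by
  have hs0 : ∀ s, a ≤ s → (0:ℝ) < s := fun s hs => by linarith
  have hs1 : ∀ s, a ≤ s → (1:ℝ) ≤ s := fun s hs => by linarith
  set g : ℝ → ℝ := fun s => (ξ s + (γ s - n + 1) * y s + γ s) / s with hgdef
  set M : ℝ := C + Cg * Cy + (n + 1) * Cy + Cg with hMdef
  have hM : 0 ≤ M := by
    have h1 : 0 ≤ Cg * Cy := mul_nonneg hCg hCy
    have h2 : 0 ≤ (n + 1) * Cy := mul_nonneg (by linarith) hCy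
    simp only [hMdef]; linarith
  have hdy' : ∀ s, a ≤ s → HasDerivAt y (-lam * s * y s + g s) s := by
    intro s hs
    have h := hdy s hs
    convert h using 1
    have h0 := (hs0 s hs).ne'
    simp only [hgdef]
    field_simp
    ring
  have hgM : ∀ s, a ≤ s → |g s| ≤ M := by
    intro s hs
    have h0 := hs0 s hs
    have h1 := hs1 s hs
    have e2 : |γ s - n + 1| ≤ Cg * s + (n + 1) := by
      have h5 : |γ s - n + 1| ≤ |γ s| + |(-n + 1)| := by
        calc |γ s - n + 1| = |γ s + (-n + 1)| := by ring_nf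
        _ ≤ |γ s| + |(-n + 1)| := abs_add_le _ _
      have h3 : |(-n + 1)| = n - 1 := by rw [abs_of_nonpos (by linarith)]; ring
      have h4 := hbγ s hs
      rw [h3] at h5
      linarith
    have e4 : |(γ s - n + 1) * y s| ≤ (Cg * s + (n + 1)) * Cy := by
      rw [abs_mul]
      exact mul_le_mul e2 (hby s hs) (abs_nonneg _)
        (by nlinarith)
    have hnum : |ξ s + (γ s - n + 1) * y s + γ s| ≤ M * s := by
      have h5 : |ξ s + (γ s - n + 1) * y s + γ s| ≤
          |ξ s| + |(γ s - n + 1) * y s| + |γ s| := by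
        calc |ξ s + (γ s - n + 1) * y s + γ s|
            ≤ |ξ s + (γ s - n + 1) * y s| + |γ s| := abs_add_le _ _
          _ ≤ |ξ s| + |(γ s - n + 1) * y s| + |γ s| := by
              linarith [abs_add_le (ξ s) ((γ s - n + 1) * y s)]
      have h6 := hbξ s hs
      have h7 := hbγ s hs
      have hCs : C * 1 ≤ C * s := mul_le_mul_of_nonneg_left h1 hC
      have hnCy : ((n + 1) * Cy) * 1 ≤ ((n + 1) * Cy) * s :=
        mul_le_mul_of_nonneg_left h1 (mul_nonneg (by linarith) hCy)
      simp only [hMdef]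
      nlinarith [e4]
    rw [hgdef]
    simp only
    rw [abs_div, abs_of_pos h0, div_le_iff₀ h0]
    exact hnum
  have hKy := y_decay lam hlam ha hM hCy hdy' hgM hby
  set Ky : ℝ := 2 * M + a * Cy + 1 with hKydef
  have hKy0 : 0 ≤ Ky := by
    have := mul_nonneg (by linarith : (0:ℝ) ≤ a) hCy
    simp only [hKydef]; linarith
  set c : ℝ := 2 * (n + C) * Ky with hcdef
  have hc0 : 0 ≤ c := by
    simp only [hcdef]
    exact mul_nonneg (by linarith) hKy0
  have hconv := converge_aux (g := ξ) (g' := fun s => (-2 * (n - 1 + ξ s) * y s) / s)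
    (k := fun s => c / s) (k' := fun s => -(c / s ^ 2)) (a := a)
    hdξ
    (fun s hs => hasDerivAt_const_div c (hs0 s hs).ne')
    (fun s hs => div_nonneg hc0 (hs0 s hs).le)
    (by
      intro s hs
      have h0 := hs0 s hs
      rw [neg_neg]
      rw [abs_div, abs_of_pos h0, div_le_div_iff₀ h0 (by positivity)]
      have e1 : |(-2 * (n - 1 + ξ s)) * y s| = 2 * |n - 1 + ξ s| * |y s| := by
        rw [abs_mul, abs_mul]
        norm_num
      have e2 : |n - 1 + ξ s| ≤ n + C := by
        calc |n - 1 + ξ s| ≤ |n - 1| + |ξ s| := abs_add_le _ _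
          _ ≤ (n - 1) + C := by
              rw [abs_of_nonneg (by linarith : (0:ℝ) ≤ n - 1)]
              linarith [hbξ s hs]
          _ ≤ n + C := by linarith
      have e3 : |y s| * s ≤ Ky := by
        have := hKy s hs
        rw [abs_mul, abs_of_pos h0] at this
        linarith
      have e5 : |n - 1 + ξ s| * (|y s| * s) ≤ (n + C) * Ky :=
        mul_le_mul e2 e3 (mul_nonneg (abs_nonneg _) h0.le) (by linarith)
      calc |(-2) * (n - 1 + ξ s) * y s| * s ^ 2
          = 2 * (|n - 1 + ξ s| * (|y s| * s)) * s := by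
            rw [show ((-2:ℝ)) * (n - 1 + ξ s) * y s = (-2 * (n - 1 + ξ s)) * y s by ring, e1]
            ring
        _ ≤ 2 * ((n + C) * Ky) * s :=
            mul_le_mul_of_nonneg_right (by linarith) h0.le
        _ = c * s := by rw [hcdef]; ring)
    ⟨C, hbξ⟩
  obtain ⟨L, hL⟩ := hconv
  exact ⟨Ky, L, c, hKy0, hc0, hKy, hL⟩

end SolitonHelpers

set_option maxHeartbeats 1000000 in
/-- A solution of the soliton system (in the radial coordinate `s`
and the variables `ξ_α = x_α − (n−1)`, `γ = Γ + n`) that is bounded in the sense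
`sup|ξ_α| < ∞`, `sup|y_α| < ∞`, `sup|γ/s| < ∞` on `[ℓ,∞)` has the asymptotics
`ξ_α = ξ_{α,∞} + O(1/s)`, `y_α = O(1/s)`, `γ = K_∞ s + O(1/s)` as `s → ∞`. -/
theorem conical_end_asymptotics
    (p₁ p₂ : ℤ) (hp₁ : 2 ≤ p₁) (hp₂ : 2 ≤ p₂)
    (lam : ℝ) (hlam : lam = -1 ∨ lam = 1)
    (n : ℝ) (hn : n = (p₁ : ℝ) + (p₂ : ℝ))
    (ℓ : ℝ) (hℓ : 0 < ℓ)
    (ξ₁ ξ₂ y₁ y₂ γ : ℝ → ℝ)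
    (hξ₁ : ∀ s, ℓ ≤ s → HasDerivAt ξ₁ ((-2 * (n - 1 + ξ₁ s) * y₁ s) / s) s)
    (hξ₂ : ∀ s, ℓ ≤ s → HasDerivAt ξ₂ ((-2 * (n - 1 + ξ₂ s) * y₂ s) / s) s)
    (hy₁ : ∀ s, ℓ ≤ s →
      HasDerivAt y₁ ((ξ₁ s + (γ s - n + 1 - lam * s ^ 2) * y₁ s + γ s) / s) s)
    (hy₂ : ∀ s, ℓ ≤ s →
      HasDerivAt y₂ ((ξ₂ s + (γ s - n + 1 - lam * s ^ 2) * y₂ s + γ s) / s) s)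
    (hγ : ∀ s, ℓ ≤ s → HasDerivAt γ ((γ s + (p₁ : ℝ) * (2 * y₁ s + (y₁ s) ^ 2)
        + (p₂ : ℝ) * (2 * y₂ s + (y₂ s) ^ 2)) / s) s)
    (hbξ₁ : ∃ C, ∀ s, ℓ ≤ s → |ξ₁ s| ≤ C)
    (hbξ₂ : ∃ C, ∀ s, ℓ ≤ s → |ξ₂ s| ≤ C)
    (hby₁ : ∃ C, ∀ s, ℓ ≤ s → |y₁ s| ≤ C)
    (hby₂ : ∃ C, ∀ s, ℓ ≤ s → |y₂ s| ≤ C)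
    (hbγ : ∃ C, ∀ s, ℓ ≤ s → |γ s / s| ≤ C) :
    ∃ ξ₁inf ξ₂inf Kinf : ℝ,
      ((fun s => ξ₁ s - ξ₁inf) =O[atTop] fun s => 1 / s) ∧
      ((fun s => ξ₂ s - ξ₂inf) =O[atTop] fun s => 1 / s) ∧
      (y₁ =O[atTop] fun s => 1 / s) ∧
      (y₂ =O[atTop] fun s => 1 / s) ∧
      ((fun s => γ s - Kinf * s) =O[atTop] fun s => 1 / s) := by
  obtain ⟨C1, hC1⟩ := hbξ₁
  obtain ⟨C2, hC2⟩ := hbξ₂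
  obtain ⟨Cy1, hCy1⟩ := hby₁
  obtain ⟨Cy2, hCy2⟩ := hby₂
  obtain ⟨Cg, hCg⟩ := hbγ
  have hC1n : 0 ≤ C1 := le_trans (abs_nonneg _) (hC1 ℓ le_rfl)
  have hC2n : 0 ≤ C2 := le_trans (abs_nonneg _) (hC2 ℓ le_rfl)
  have hCy1n : 0 ≤ Cy1 := le_trans (abs_nonneg _) (hCy1 ℓ le_rfl)
  have hCy2n : 0 ≤ Cy2 := le_trans (abs_nonneg _) (hCy2 ℓ le_rfl)
  have hCgn : 0 ≤ Cg := le_trans (abs_nonneg _) (hCg ℓ le_rfl)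
  have hp1r : (2:ℝ) ≤ (p₁:ℝ) := by exact_mod_cast hp₁
  have hp2r : (2:ℝ) ≤ (p₂:ℝ) := by exact_mod_cast hp₂
  have hn4 : (4:ℝ) ≤ n := by rw [hn]; linarith
  set a : ℝ := max ℓ 2 with hadef
  have ha2 : (2:ℝ) ≤ a := le_max_right _ _
  have haℓ : ℓ ≤ a := le_max_left _ _
  have hsℓ : ∀ s, a ≤ s → ℓ ≤ s := fun s hs => le_trans haℓ hs
  have hs0 : ∀ s, a ≤ s → (0:ℝ) < s := fun s hs => by linarith
  have hs1 : ∀ s, a ≤ s → (1:ℝ) ≤ s := fun s hs => by linarith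
  have hγb : ∀ s, a ≤ s → |γ s| ≤ Cg * s := by
    intro s hs
    have h0 := hs0 s hs
    have h := hCg s (hsℓ s hs)
    rw [abs_div, abs_of_pos h0, div_le_iff₀ h0] at h
    linarith
  obtain ⟨Ky₁, ξ₁inf, c₁, hKy₁0, hc₁0, hKy₁, hξ₁c⟩ :=
    component_asymp lam n hlam hn4 ha2 hC1n hCy1n hCgn
      (fun s hs => hξ₁ s (hsℓ s hs)) (fun s hs => hy₁ s (hsℓ s hs))
      (fun s hs => hC1 s (hsℓ s hs)) (fun s hs => hCy1 s (hsℓ s hs)) hγb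
  obtain ⟨Ky₂, ξ₂inf, c₂, hKy₂0, hc₂0, hKy₂, hξ₂c⟩ :=
    component_asymp lam n hlam hn4 ha2 hC2n hCy2n hCgn
      (fun s hs => hξ₂ s (hsℓ s hs)) (fun s hs => hy₂ s (hsℓ s hs))
      (fun s hs => hC2 s (hsℓ s hs)) (fun s hs => hCy2 s (hsℓ s hs)) hγb
  -- the γ asymptotics
  set Ky : ℝ := Ky₁ + Ky₂ with hKydef
  have hKy0 : 0 ≤ Ky := by simp only [hKydef]; linarith
  have hKyb₁ : ∀ s, a ≤ s → |s * y₁ s| ≤ Ky := fun s hs =>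
    le_trans (hKy₁ s hs) (by simp only [hKydef]; linarith)
  have hKyb₂ : ∀ s, a ≤ s → |s * y₂ s| ≤ Ky := fun s hs =>
    le_trans (hKy₂ s hs) (by simp only [hKydef]; linarith)
  set cP : ℝ := n * (2 * Ky + Ky ^ 2) with hcPdef
  have hcP0 : 0 ≤ cP := by
    simp only [hcPdef]
    exact mul_nonneg (by linarith) (by positivity)
  have hterm : ∀ (y : ℝ → ℝ), (∀ s, a ≤ s → |s * y s| ≤ Ky) →
      ∀ s, a ≤ s → |2 * y s + y s ^ 2| * s ≤ 2 * Ky + Ky ^ 2 := by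
    intro y hy s hs
    have h0 := hs0 s hs
    have h1 := hs1 s hs
    have hA : |y s| * s ≤ Ky := by
      have := hy s hs; rw [abs_mul, abs_of_pos h0] at this; linarith
    have hyn : 0 ≤ |y s| := abs_nonneg _
    have habs : |2 * y s + y s ^ 2| ≤ 2 * |y s| + |y s| ^ 2 := by
      calc |2 * y s + y s ^ 2| ≤ |2 * y s| + |y s ^ 2| := abs_add_le _ _
        _ = 2 * |y s| + |y s| ^ 2 := by rw [abs_mul, abs_pow]; norm_num
    have k1 := mul_le_mul_of_nonneg_right habs h0.le
    have k2 := mul_self_le_mul_self (mul_nonneg hyn h0.le) hA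
    have k3 : |y s| ^ 2 * s ≤ |y s| ^ 2 * s ^ 2 := by
      nlinarith [mul_nonneg (mul_nonneg (sq_nonneg (|y s|)) h0.le)
        (by linarith : (0:ℝ) ≤ s - 1)]
    nlinarith [k1, k2, k3, hA]
  have hP : ∀ s, a ≤ s →
      |(p₁:ℝ) * (2 * y₁ s + (y₁ s) ^ 2) + (p₂:ℝ) * (2 * y₂ s + (y₂ s) ^ 2)| * s ≤ cP := by
    intro s hs
    have t1 := hterm y₁ hKyb₁ s hs
    have t2 := hterm y₂ hKyb₂ s hs
    have h0 := hs0 s hs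
    have habs : |(p₁:ℝ) * (2 * y₁ s + (y₁ s) ^ 2) + (p₂:ℝ) * (2 * y₂ s + (y₂ s) ^ 2)| ≤
        (p₁:ℝ) * |2 * y₁ s + (y₁ s) ^ 2| + (p₂:ℝ) * |2 * y₂ s + (y₂ s) ^ 2| := by
      calc |(p₁:ℝ) * (2 * y₁ s + (y₁ s) ^ 2) + (p₂:ℝ) * (2 * y₂ s + (y₂ s) ^ 2)|
          ≤ |(p₁:ℝ) * (2 * y₁ s + (y₁ s) ^ 2)| + |(p₂:ℝ) * (2 * y₂ s + (y₂ s) ^ 2)| :=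
            abs_add_le _ _
        _ = (p₁:ℝ) * |2 * y₁ s + (y₁ s) ^ 2| + (p₂:ℝ) * |2 * y₂ s + (y₂ s) ^ 2| := by
            rw [abs_mul, abs_mul, abs_of_nonneg (by linarith : (0:ℝ) ≤ (p₁:ℝ)),
              abs_of_nonneg (by linarith : (0:ℝ) ≤ (p₂:ℝ))]
    have k := mul_le_mul_of_nonneg_right habs h0.le
    have k1 := mul_le_mul_of_nonneg_left t1 (by linarith : (0:ℝ) ≤ (p₁:ℝ))
    have k2 := mul_le_mul_of_nonneg_left t2 (by linarith : (0:ℝ) ≤ (p₂:ℝ))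
    simp only [hcPdef]
    rw [hn]
    linarith [k, k1, k2]
  have hdG : ∀ s, a ≤ s → HasDerivAt (fun t => γ t / t)
      (((p₁:ℝ) * (2 * y₁ s + (y₁ s) ^ 2) + (p₂:ℝ) * (2 * y₂ s + (y₂ s) ^ 2)) / s ^ 2) s := by
    intro s hs
    have h0 := hs0 s hs
    have h := (hγ s (hsℓ s hs)).div (hasDerivAt_id' (x := s)) h0.ne'
    refine h.congr_deriv ?_
    have hne := h0.ne'
    field_simp
    ring
  obtain ⟨Kinf, hKinf⟩ := converge_aux
    (g := fun s => γ s / s)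
    (g' := fun s => ((p₁:ℝ) * (2 * y₁ s + (y₁ s) ^ 2) + (p₂:ℝ) * (2 * y₂ s + (y₂ s) ^ 2)) / s ^ 2)
    (k := fun s => (cP / 2) / s ^ 2) (k' := fun s => -(cP / s ^ 3)) (a := a)
    hdG
    (by
      intro s hs
      have h0 := hs0 s hs
      have h := (hasDerivAt_const s (cP / 2)).div (hasDerivAt_pow 2 s) (pow_ne_zero 2 h0.ne')
      refine h.congr_deriv ?_
      have hne := h0.ne'
      field_simp
      ring)
    (fun s hs => div_nonneg (by linarith) (by positivity))
    (by
      intro s hs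
      have h0 := hs0 s hs
      rw [neg_neg]
      rw [abs_div, abs_of_pos (by positivity : (0:ℝ) < s ^ 2),
        div_le_div_iff₀ (by positivity) (by positivity)]
      have k := mul_le_mul_of_nonneg_right (hP s hs) (sq_nonneg s)
      nlinarith [k])
    ⟨Cg, fun s hs => hCg s (hsℓ s hs)⟩
  refine ⟨ξ₁inf, ξ₂inf, Kinf, ?_, ?_, ?_, ?_, ?_⟩
  · rw [isBigO_iff]
    refine ⟨c₁, ?_⟩
    filter_upwards [eventually_ge_atTop a] with s hs
    have h0 := hs0 s hs
    rw [Real.norm_eq_abs, Real.norm_eq_abs, abs_of_pos (by positivity : (0:ℝ) < 1 / s),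
      mul_one_div]
    exact hξ₁c s hs
  · rw [isBigO_iff]
    refine ⟨c₂, ?_⟩
    filter_upwards [eventually_ge_atTop a] with s hs
    have h0 := hs0 s hs
    rw [Real.norm_eq_abs, Real.norm_eq_abs, abs_of_pos (by positivity : (0:ℝ) < 1 / s),
      mul_one_div]
    exact hξ₂c s hs
  · rw [isBigO_iff]
    refine ⟨Ky₁, ?_⟩
    filter_upwards [eventually_ge_atTop a] with s hs
    have h0 := hs0 s hs
    rw [Real.norm_eq_abs, Real.norm_eq_abs, abs_of_pos (by positivity : (0:ℝ) < 1 / s),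
      mul_one_div, le_div_iff₀ h0]
    have := hKy₁ s hs
    rw [abs_mul, abs_of_pos h0] at this
    linarith
  · rw [isBigO_iff]
    refine ⟨Ky₂, ?_⟩
    filter_upwards [eventually_ge_atTop a] with s hs
    have h0 := hs0 s hs
    rw [Real.norm_eq_abs, Real.norm_eq_abs, abs_of_pos (by positivity : (0:ℝ) < 1 / s),
      mul_one_div]
    rw [le_div_iff₀ h0]
    have := hKy₂ s hs
    rw [abs_mul, abs_of_pos h0] at this
    linarith
  · rw [isBigO_iff]
    refine ⟨cP / 2, ?_⟩
    filter_upwards [eventually_ge_atTop a] with s hs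
    have h0 := hs0 s hs
    have hne := h0.ne'
    rw [Real.norm_eq_abs, Real.norm_eq_abs, abs_of_pos (by positivity : (0:ℝ) < 1 / s),
      mul_one_div]
    have h := hKinf s hs
    have e : |γ s - Kinf * s| = |γ s / s - Kinf| * s := by
      rw [show γ s - Kinf * s = (γ s / s - Kinf) * s by field_simp, abs_mul,
        abs_of_pos h0]
    calc |γ s - Kinf * s| = |γ s / s - Kinf| * s := e
      _ ≤ ((cP / 2) / s ^ 2) * s := mul_le_mul_of_nonneg_right h h0.le
      _ = (cP / 2) / s := by field_simp
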